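/- For a max-plus matrix A ∈ R̄^{m×n} and vector b ∈ R̄^m, the system A⊗x = b has a solution x if and only if the vector x̄ = A^#⊗'b is a solution, i.e., if and only if A⊗(A^#⊗'b) = b. -/

import Mathlib

/-!  Max-plus algebra over `R̄ = ℝ ∪ {-∞}`, embedded in `EReal = ℝ ∪ {±∞}`
(membership in `R̄` is expressed by the hypothesis `≠ ⊤`), together with the dual
min-plus operations `a ⊕' b = min a b` and `a ⊗' b` (`= a + b` when
`{a,b} ≠ {-∞,+∞}`, and `(-∞) ⊗' (+∞) = (+∞) ⊗' (-∞) = +∞`). -/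

/-- Dual addition `a ⊗' b` on `EReal`. -/
noncomputable def dualAdd (a b : EReal) : EReal := -((-a) + (-b))

/-- Max-plus matrix product over `EReal`. -/
noncomputable def eMul {α β γ : Type*} [Fintype β] (A : Matrix α β EReal)
    (B : Matrix β γ EReal) : Matrix α γ EReal :=
  fun i j => ⨆ k, A i k + B k j

/-- Max-plus matrix-vector product over `EReal`. -/
noncomputable def eMulVec {α β : Type*} [Fintype β] (A : Matrix α β EReal)
    (x : β → EReal) : α → EReal :=
  fun i => ⨆ k, A i k + x k

/-- Min-plus matrix-vector product: `(M ⊗' v) i = min_k (M i k ⊗' v k)`. -/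
noncomputable def eMinMulVec {α β : Type*} [Fintype β] (M : Matrix α β EReal)
    (v : β → EReal) : α → EReal :=
  fun i => ⨅ k, dualAdd (M i k) (v k)

/-- The conjugate `A^# = -Aᵀ`. -/
noncomputable def econj {α β : Type*} (A : Matrix α β EReal) : Matrix β α EReal := fun i j => -(A j i)

/-- Tropical tensor product over `EReal`: block matrix whose `(k,l)` block is `A ⊗ B k l`. -/
noncomputable def eTensor {α β γ δ : Type*} (A : Matrix α β EReal) (B : Matrix γ δ EReal) :
    Matrix (γ × α) (δ × β) EReal :=
  fun p q => A p.2 q.2 + B p.1 q.1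

/-- `vec X`: the columns of `X` stacked; component `(c, r)` is `X r c`. -/
def eVec {α β : Type*} (X : Matrix α β EReal) : β × α → EReal := fun p => X p.2 p.1


private lemma trop_aux1 (a c : EReal) (ha : a ≠ ⊤) (hc : c ≠ ⊤) :
    a + (-(a + (-c))) ≤ c := by
  induction a using EReal.rec with
  | bot => simp
  | coe a =>
    induction c using EReal.rec with
    | bot => simp
    | coe c =>
      rw [← EReal.coe_neg c, ← EReal.coe_add, ← EReal.coe_neg, ← EReal.coe_add]
      norm_cast; linarith
    | top => exact absurd rfl hc
  | top => exact absurd rfl ha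

private lemma trop_aux2 (a x c : EReal) (ha : a ≠ ⊤) (hx : x ≠ ⊤) (hc : c ≠ ⊤)
    (h : a + x ≤ c) : x ≤ -(a + (-c)) := by
  induction a using EReal.rec with
  | bot =>
    induction c using EReal.rec with
    | bot => simp
    | coe c => simp
    | top => exact absurd rfl hc
  | coe a =>
    induction x using EReal.rec with
    | bot => exact bot_le
    | coe x =>
      induction c using EReal.rec with
      | bot => simp [← EReal.coe_add] at h
      | coe c =>
        rw [← EReal.coe_neg c, ← EReal.coe_add, ← EReal.coe_neg]
        rw [← EReal.coe_add] at h
        norm_cast at h ⊢; linarith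
      | top => exact absurd rfl hc
    | top => exact absurd rfl hx
  | top => exact absurd rfl ha

/-- `A ⊗ x = b` has a solution `x ∈ R̄ⁿ` if and only if
`x̄ = A^# ⊗' b` is a solution, i.e. iff `A ⊗ (A^# ⊗' b) = b`. -/
theorem solvable_iff_principal_solution (m n : ℕ) (A : Matrix (Fin m) (Fin n) EReal)
    (b : Fin m → EReal) (hA : ∀ i j, A i j ≠ ⊤) (hb : ∀ i, b i ≠ ⊤) :
    (∃ x : Fin n → EReal, (∀ j, x j ≠ ⊤) ∧ eMulVec A x = b) ↔
      eMulVec A (eMinMulVec (econj A) b) = b := by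
  set xb : Fin n → EReal := eMinMulVec (econj A) b with hxb
  have hxbj : ∀ j, xb j = ⨅ i, -(A i j + (-b i)) := by
    intro j
    simp only [hxb, eMinMulVec, dualAdd, econj, neg_neg]
  constructor
  · rintro ⟨x, hx, rfl⟩
    have hle : ∀ j, x j ≤ xb j := by
      intro j
      rw [hxbj]
      refine le_iInf fun i => trop_aux2 (A i j) (x j) _ (hA i j) (hx j) (hb i) ?_
      exact le_iSup (fun k => A i k + x k) j
    funext i
    refine le_antisymm ?_ ?_
    · refine iSup_le fun j => ?_
      calc A i j + xb j ≤ A i j + (-(A i j + (-(eMulVec A x i)))) := by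
            refine add_le_add_right ?_ _
            rw [hxbj]
            exact iInf_le _ i
        _ ≤ eMulVec A x i := trop_aux1 _ _ (hA i j) (hb i)
    · exact iSup_mono fun j => add_le_add_right (hle j) _
  · intro h
    have hcol : ∀ j, xb j = ⊤ → ∀ i, A i j = ⊥ := by
      intro j hj i
      rw [hxbj] at hj
      have := (iInf_eq_top.mp hj) i
      have h2 : A i j + (-b i) = ⊥ := by
        rwa [EReal.neg_eq_top_iff] at this
      rcases EReal.add_eq_bot_iff.mp h2 with h3 | h3
      · exact h3
      · exact absurd (EReal.neg_eq_bot_iff.mp h3) (hb i)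
    refine ⟨fun j => if xb j = ⊤ then ⊥ else xb j, fun j => ?_, ?_⟩
    · simp only []
      split
      · exact bot_ne_top
      · assumption
    · rw [← h]
      funext i
      simp only [eMulVec]
      congr 1
      funext j
      by_cases hj : xb j = ⊤
      · rw [hj, if_pos rfl, hcol j hj i]
        simp
      · rw [if_neg hj]
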